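/- For every x ∈ m̃ one has the direct sum decomposition m(x) = m̃(x) ⊕ (m(x) ∩ m'), where m(x) = {y ∈ m : [x,y] ∈ m} and m̃(x) = {y ∈ m̃ : [x,y] ∈ m̃}. -/

import Mathlib

open Module

theorem stmt5 {g : Type*} [LieRing g] [LieAlgebra ℝ g] [FiniteDimensional ℝ g]
    -- an ad-invariant inner product on g
    (B : g →ₗ[ℝ] g →ₗ[ℝ] ℝ)
    (hsymm : ∀ x y : g, B x y = B y x)
    (hpos : ∀ x : g, x ≠ 0 → 0 < B x x)
    (hinv : ∀ x y z : g, B ⁅z, x⁆ y + B x ⁅z, y⁆ = 0)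
    -- an involutive automorphism σ preserving B
    (σ : g →ₗ⁅ℝ⁆ g)
    (hσ2 : ∀ x : g, σ (σ x) = x)
    (hσB : ∀ x y : g, B (σ x) (σ y) = B x y)
    -- a ∈ g', k = g^a, m = k^⊥
    (a : g) (ha : σ a = -a)
    (k m : Submodule ℝ g)
    (hk : ∀ z : g, z ∈ k ↔ ⁅a, z⁆ = 0)
    (hm : ∀ y : g, y ∈ m ↔ ∀ z ∈ k, B z y = 0) :
    -- for every x ∈ m̃ one has m(x) = m̃(x) ⊕ (m(x) ∩ m')
    ∀ x : g, x ∈ m → σ x = x →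
      -- every element of m(x) decomposes as a sum of an element of m̃(x)
      -- and an element of m(x) ∩ m'
      (∀ y : g, y ∈ m → ⁅x, y⁆ ∈ m →
        ∃ u v : g,
          (u ∈ m ∧ σ u = u ∧ ⁅x, u⁆ ∈ m ∧ σ ⁅x, u⁆ = ⁅x, u⁆) ∧
          (v ∈ m ∧ σ v = -v ∧ ⁅x, v⁆ ∈ m) ∧
          y = u + v)
      -- m̃(x) ⊆ m(x)
      ∧ (∀ u : g, u ∈ m → σ u = u → ⁅x, u⁆ ∈ m → σ ⁅x, u⁆ = ⁅x, u⁆ →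
          u ∈ m ∧ ⁅x, u⁆ ∈ m)
      -- the sum is direct: m̃(x) ∩ (m(x) ∩ m') = 0
      ∧ (∀ u : g, u ∈ m → σ u = u → ⁅x, u⁆ ∈ m → σ ⁅x, u⁆ = ⁅x, u⁆ →
          σ u = -u → u = 0) := by
  intro x hx hσx
  have hσk : ∀ z ∈ k, σ z ∈ k := by
    intro z hz
    rw [hk] at hz ⊢
    have h1 : σ ⁅a, z⁆ = -⁅a, σ z⁆ := by
      rw [LieHom.map_lie, ha, neg_lie]
    rw [hz, map_zero σ] at h1
    exact neg_eq_zero.mp h1.symm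
  have hσm : ∀ y ∈ m, σ y ∈ m := by
    intro y hy
    rw [hm]
    intro z hz
    calc B z (σ y) = B (σ (σ z)) (σ y) := by rw [hσ2]
    _ = B (σ z) y := hσB _ _
    _ = 0 := (hm y).mp hy (σ z) (hσk z hz)
  refine ⟨?_, ?_, ?_⟩
  · intro y hy hxy
    have hσy := hσm y hy
    have hσxy := hσm _ hxy
    have hbr : σ ⁅x, y⁆ = ⁅x, σ y⁆ := by rw [LieHom.map_lie, hσx]
    refine ⟨(1/2 : ℝ) • (y + σ y), (1/2 : ℝ) • (y - σ y), ⟨?_, ?_, ?_, ?_⟩, ⟨?_, ?_, ?_⟩, ?_⟩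
    · exact m.smul_mem _ (m.add_mem hy hσy)
    · rw [map_smul σ, map_add σ, hσ2, add_comm]
    · rw [lie_smul, lie_add, ← hbr]
      exact m.smul_mem _ (m.add_mem hxy hσxy)
    · have e : ⁅x, (1/2 : ℝ) • (y + σ y)⁆ = (1/2 : ℝ) • (⁅x, y⁆ + σ ⁅x, y⁆) := by
        rw [lie_smul, lie_add, hbr]
      rw [e, map_smul σ, map_add σ, hσ2, add_comm]
    · exact m.smul_mem _ (m.sub_mem hy hσy)
    · rw [map_smul σ, map_sub σ, hσ2, ← smul_neg, neg_sub]
    · rw [lie_smul, lie_sub, ← hbr]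
      exact m.smul_mem _ (m.sub_mem hxy hσxy)
    · module
  · intro u hu _ hxu _
    exact ⟨hu, hxu⟩
  · intro u _ h1 _ _ h2
    have h3 : (2 : ℝ) • u = 0 := by
      rw [two_smul]
      nth_rewrite 1 [← h1]
      rw [h2]
      abel
    rcases smul_eq_zero.mp h3 with h | h
    · norm_num at h
    · exact h
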